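/- arXiv:2003.03564 — 2 statements merged into one kernel-verified Lean document; each statement's English description precedes it below -/
import Mathlib

section
/- Let θ ∼ U(-1,1), Δ ∈ (0,1), and Q(θ) = ((1+Δ)/2)·m(θ) with m the ternary mask (m(θ)=1 if θ>Δ, -1 if θ<-Δ, 0 otherwise). Then the mean squared quantization error is E[(θ - Q(θ))²] = 1/3 - (1-Δ)(1+Δ)²/4. -/
open MeasureTheory ProbabilityTheory

/-- The uniform probability measure on the interval `[-1, 1]`. -/
noncomputable def unif : Measure ℝ :=
  (2 : ENNReal)⁻¹ • (volume.restrict (Set.Icc (-1 : ℝ) 1))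

/-- The ternary mask with threshold `Δ`. -/
noncomputable def mask (Δ x : ℝ) : ℝ :=
  if Δ < x then 1 else if x < -Δ then -1 else 0

theorem fttq_mse (Δ : ℝ) (hΔ : 0 < Δ) (hΔ1 : Δ < 1) :
    (∫ x, (x - ((1 + Δ) / 2) * mask Δ x) ^ 2 ∂unif)
      = 1 / 3 - (1 - Δ) * (1 + Δ) ^ 2 / 4 := by
  set w : ℝ := (1 + Δ) / 2 with hw
  set f : ℝ → ℝ := fun x => (x - w * mask Δ x) ^ 2 with hf
  have hne : ∀ c : ℝ, ∀ᵐ x ∂(volume : Measure ℝ), x ≠ c := by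
    intro c
    rw [ae_iff]
    simp
  -- a.e. identities on the three subintervals
  have e1 : ∀ᵐ x ∂(volume : Measure ℝ), x ∈ Set.uIoc (-1 : ℝ) (-Δ) → f x = (x + w) ^ 2 := by
    filter_upwards [hne (-Δ)] with x hx hx'
    rw [Set.uIoc_of_le (by linarith)] at hx'
    have h1 : x < -Δ := lt_of_le_of_ne hx'.2 hx
    have hm : mask Δ x = -1 := by
      simp [mask, if_neg (show ¬ Δ < x by linarith), if_pos h1]
    simp only [hf, hm]
    ring
  have e2 : ∀ᵐ x ∂(volume : Measure ℝ), x ∈ Set.uIoc (-Δ : ℝ) Δ → f x = x ^ 2 := by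
    filter_upwards with x hx'
    rw [Set.uIoc_of_le (by linarith)] at hx'
    have hm : mask Δ x = 0 := by
      simp [mask, if_neg (show ¬ Δ < x by linarith [hx'.2]),
        if_neg (show ¬ x < -Δ by linarith [hx'.1])]
    simp only [hf, hm]
    ring
  have e3 : ∀ᵐ x ∂(volume : Measure ℝ), x ∈ Set.uIoc (Δ : ℝ) 1 → f x = (x - w) ^ 2 := by
    filter_upwards with x hx'
    rw [Set.uIoc_of_le (by linarith)] at hx'
    have hm : mask Δ x = 1 := by simp [mask, if_pos hx'.1]
    simp only [hf, hm]
    ring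
  -- integrability of f on the three subintervals
  have c1 : Continuous fun x : ℝ => (x + w) ^ 2 := by continuity
  have c2 : Continuous fun x : ℝ => x ^ 2 := by continuity
  have c3 : Continuous fun x : ℝ => (x - w) ^ 2 := by continuity
  have hi1 : IntervalIntegrable f volume (-1) (-Δ) :=
    (c1.intervalIntegrable _ _).congr_ae
      (Filter.EventuallyEq.symm ((ae_restrict_iff' measurableSet_uIoc).mpr e1))
  have hi2 : IntervalIntegrable f volume (-Δ) Δ :=
    (c2.intervalIntegrable _ _).congr_ae
      (Filter.EventuallyEq.symm ((ae_restrict_iff' measurableSet_uIoc).mpr e2))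
  have hi3 : IntervalIntegrable f volume Δ 1 :=
    (c3.intervalIntegrable _ _).congr_ae
      (Filter.EventuallyEq.symm ((ae_restrict_iff' measurableSet_uIoc).mpr e3))
  have hstep : (∫ x, f x ∂unif) = (1 / 2) * ∫ x in (-1 : ℝ)..1, f x := by
    rw [unif, integral_smul_measure, intervalIntegral.integral_of_le (by linarith : (-1:ℝ) ≤ 1),
      ← integral_Icc_eq_integral_Ioc]
    norm_num
  have hsplit : (∫ x in (-1 : ℝ)..1, f x)
      = (∫ x in (-1 : ℝ)..(-Δ), f x) + (∫ x in (-Δ : ℝ)..Δ, f x) + (∫ x in (Δ : ℝ)..1, f x) := by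
    rw [add_assoc, intervalIntegral.integral_add_adjacent_intervals hi2 hi3,
      intervalIntegral.integral_add_adjacent_intervals hi1 (hi2.trans hi3)]
  have v1 : (∫ x in (-1 : ℝ)..(-Δ), f x) = ((-Δ + w) ^ 3 - (-1 + w) ^ 3) / 3 := by
    rw [intervalIntegral.integral_congr_ae e1]
    have := intervalIntegral.integral_comp_add_right (a := (-1:ℝ)) (b := -Δ)
      (fun y : ℝ => y ^ 2) w
    rw [this, integral_pow]
    norm_num
  have v2 : (∫ x in (-Δ : ℝ)..Δ, f x) = (Δ ^ 3 - (-Δ) ^ 3) / 3 := by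
    rw [intervalIntegral.integral_congr_ae e2, integral_pow]
    norm_num
  have v3 : (∫ x in (Δ : ℝ)..1, f x) = ((1 - w) ^ 3 - (Δ - w) ^ 3) / 3 := by
    rw [intervalIntegral.integral_congr_ae e3]
    have := intervalIntegral.integral_comp_sub_right (a := (Δ:ℝ)) (b := 1)
      (fun y : ℝ => y ^ 2) w
    rw [this, integral_pow]
    norm_num
  rw [hstep, hsplit, v1, v2, v3, hw]
  ring
end

section
/- Among all choices of scalar w ≥ 0, the quantizer Q_w(θ) = w·m(θ) (m the ternary mask with threshold Δ ∈ (0,1)) minimizing E[(θ - Q_w(θ))²] for θ ∼ U(-1,1) is w = (1+Δ)/2, and the minimal error is 1/3 - (1-Δ)(1+Δ)²/4. -/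
open MeasureTheory ProbabilityTheory

/-- interval integral of a shifted square -/
lemma sq_shift_int (a b c : ℝ) :
    ∫ x in a..b, (x - c) ^ 2 = ((b - c) ^ 3 - (a - c) ^ 3) / 3 := by
  have h : ∀ x : ℝ, HasDerivAt (fun y : ℝ => (y - c) ^ 3 / 3) ((x - c) ^ 2) x := by
    intro x
    have : HasDerivAt (fun y : ℝ => (y - c) ^ 3) (3 * (x - c) ^ 2 * 1) x :=
      (((hasDerivAt_id x).sub_const c).pow 3)
    simpa [mul_comm, mul_div_assoc] using this.div_const 3
  rw [intervalIntegral.integral_eq_sub_of_hasDerivAt (fun x _ => h x)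
      (by apply Continuous.intervalIntegrable; continuity)]
  ring

lemma mask_eval (Δ w : ℝ) (hΔ : 0 < Δ) (hΔ1 : Δ < 1) :
    (∫ x, (x - w * mask Δ x) ^ 2 ∂unif)
      = 1 / 3 - w * (1 - Δ ^ 2) + w ^ 2 * (1 - Δ) := by
  have hne : (-Δ : ℝ) ≠ -1 := by intro h; nlinarith [h]
  -- rewrite as interval integral
  have h1 : (∫ x, (x - w * mask Δ x) ^ 2 ∂unif)
      = (2 : ℝ)⁻¹ * ∫ x in (-1 : ℝ)..1, (x - w * mask Δ x) ^ 2 := by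
    rw [unif, integral_smul_measure]
    rw [intervalIntegral.integral_of_le (by norm_num : (-1:ℝ) ≤ 1),
      ← MeasureTheory.integral_Icc_eq_integral_Ioc]
    norm_num
  -- piece integrals
  have hL : ∫ x in (-1 : ℝ)..(-Δ), (x - w * mask Δ x) ^ 2
      = ∫ x in (-1 : ℝ)..(-Δ), (x + w) ^ 2 := by
    apply intervalIntegral.integral_congr_ae
    have hae : ∀ᵐ x : ℝ, x ≠ -Δ := by
      rw [ae_iff]
      simpa using (Real.volume_singleton (a := -Δ))
    filter_upwards [hae] with x hx hmem
    rw [Set.uIoc_of_le (by linarith : (-1:ℝ) ≤ -Δ)] at hmem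
    have hxlt : x < -Δ := lt_of_le_of_ne hmem.2 hx
    have : mask Δ x = -1 := by
      rw [mask, if_neg (by linarith), if_pos hxlt]
    rw [this]; ring
  have hM : ∫ x in (-Δ : ℝ)..Δ, (x - w * mask Δ x) ^ 2
      = ∫ x in (-Δ : ℝ)..Δ, (x - 0) ^ 2 := by
    apply intervalIntegral.integral_congr
    intro x hx
    rw [Set.uIcc_of_le (by linarith : (-Δ:ℝ) ≤ Δ)] at hx
    have : mask Δ x = 0 := by
      rw [mask, if_neg (by simpa using hx.2), if_neg (by simpa using hx.1)]
    simp [this]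
  have hR : ∫ x in (Δ : ℝ)..1, (x - w * mask Δ x) ^ 2
      = ∫ x in (Δ : ℝ)..1, (x - w) ^ 2 := by
    apply intervalIntegral.integral_congr_ae
    filter_upwards with x hx
    rw [Set.uIoc_of_le (le_of_lt hΔ1)] at hx
    have hm : mask Δ x = 1 := by rw [mask, if_pos hx.1]
    rw [hm]; ring
  -- integrability of pieces
  have hiL : IntervalIntegrable (fun x => (x - w * mask Δ x) ^ 2) volume (-1) (-Δ) := by
    apply IntervalIntegrable.congr_ae
      (f := fun x : ℝ => (x + w) ^ 2)
      (by apply Continuous.intervalIntegrable; continuity)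
    have hae : ∀ᵐ x : ℝ, x ≠ -Δ := by
      rw [ae_iff]; simpa using (Real.volume_singleton (a := -Δ))
    filter_upwards [ae_restrict_mem measurableSet_uIoc, ae_restrict_of_ae hae] with x hmem hx
    rw [Set.uIoc_of_le (by linarith : (-1:ℝ) ≤ -Δ)] at hmem
    have hxlt : x < -Δ := lt_of_le_of_ne hmem.2 hx
    have hm : mask Δ x = -1 := by rw [mask, if_neg (by linarith), if_pos hxlt]
    show (x + w) ^ 2 = (x - w * mask Δ x) ^ 2
    rw [hm]; ring
  have hiM : IntervalIntegrable (fun x => (x - w * mask Δ x) ^ 2) volume (-Δ) Δ := by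
    apply IntervalIntegrable.congr_ae
      (f := fun x : ℝ => (x - 0) ^ 2)
      (by apply Continuous.intervalIntegrable; continuity)
    filter_upwards [ae_restrict_mem measurableSet_uIoc] with x hmem
    rw [Set.uIoc_of_le (by linarith : (-Δ:ℝ) ≤ Δ)] at hmem
    have hm : mask Δ x = 0 := by
      rw [mask, if_neg (by simpa using not_lt.mpr hmem.2),
        if_neg (by simpa using not_lt.mpr (le_of_lt hmem.1))]
    show (x - 0) ^ 2 = (x - w * mask Δ x) ^ 2
    rw [hm]; ring
  have hiR : IntervalIntegrable (fun x => (x - w * mask Δ x) ^ 2) volume Δ 1 := by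
    apply IntervalIntegrable.congr_ae
      (f := fun x : ℝ => (x - w) ^ 2)
      (by apply Continuous.intervalIntegrable; continuity)
    filter_upwards [ae_restrict_mem measurableSet_uIoc] with x hmem
    rw [Set.uIoc_of_le (le_of_lt hΔ1)] at hmem
    have hm : mask Δ x = 1 := by rw [mask, if_pos hmem.1]
    show (x - w) ^ 2 = (x - w * mask Δ x) ^ 2
    rw [hm]; ring
  have hsplit : ∫ x in (-1 : ℝ)..1, (x - w * mask Δ x) ^ 2
      = (∫ x in (-1 : ℝ)..(-Δ), (x - w * mask Δ x) ^ 2)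
        + (∫ x in (-Δ : ℝ)..Δ, (x - w * mask Δ x) ^ 2)
        + (∫ x in (Δ : ℝ)..1, (x - w * mask Δ x) ^ 2) := by
    rw [intervalIntegral.integral_add_adjacent_intervals hiL hiM,
      intervalIntegral.integral_add_adjacent_intervals (hiL.trans hiM) hiR]
  rw [h1, hsplit, hL, hM, hR]
  have e1 := sq_shift_int (-1) (-Δ) (-w)
  have e2 := sq_shift_int (-Δ) Δ 0
  have e3 := sq_shift_int Δ 1 w
  simp only [sub_neg_eq_add] at e1
  rw [e1, e2, e3]
  ring

theorem fttq_optimal_scalar (Δ : ℝ) (hΔ : 0 < Δ) (hΔ1 : Δ < 1) :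
    (∀ w : ℝ, 0 ≤ w →
        (∫ x, (x - ((1 + Δ) / 2) * mask Δ x) ^ 2 ∂unif)
          ≤ ∫ x, (x - w * mask Δ x) ^ 2 ∂unif) ∧
    (∫ x, (x - ((1 + Δ) / 2) * mask Δ x) ^ 2 ∂unif)
      = 1 / 3 - (1 - Δ) * (1 + Δ) ^ 2 / 4 := by
  constructor
  · intro w _
    rw [mask_eval Δ ((1 + Δ) / 2) hΔ hΔ1, mask_eval Δ w hΔ hΔ1]
    nlinarith [sq_nonneg (w - (1 + Δ) / 2), sq_nonneg w]
  · rw [mask_eval Δ ((1 + Δ) / 2) hΔ hΔ1]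
    ring
end
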